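/- arXiv:2309.13764 — 2 statements merged into one kernel-verified Lean document; each statement's English description precedes it below -/
import Mathlib

section
/- With the same setup (H, H_J, ideal I as above), the natural ring map A^H/(I ∩ A^H) → A^{H_J}/(I ∩ A^{H_J}) induced by the inclusion A^H ⊆ A^{H_J} is a ring isomorphism. -/
open MvPolynomial

/-- The rescaling automorphism of `ℂ[z_1, …, z_{n-1}]` sending `z_i ↦ ω^{a_i} z_i`. -/
noncomputable def rescale4 (n : ℕ) (ω : ℂ) (a : Fin (n - 1) → ℤ) :
    MvPolynomial (Fin (n - 1)) ℂ →ₐ[ℂ] MvPolynomial (Fin (n - 1)) ℂ :=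
  aeval (fun i => (ω ^ a i) • (X i : MvPolynomial (Fin (n - 1)) ℂ))

/-- Exponent tuples defining elements of `H`: `Σ r·a_r ≡ 0 mod n`. -/
def Hcond (n : ℕ) (a : Fin (n - 1) → ℤ) : Prop :=
  (n : ℤ) ∣ ∑ i : Fin (n - 1), (((i : ℕ) : ℤ) + 1) * a i

/-- Exponent tuples defining elements of `H_J`. -/
def HJcond (n : ℕ) (J : Finset (Fin (n - 1))) (a : Fin (n - 1) → ℤ) : Prop :=
  Hcond n a ∧ ∀ j ∈ J, (n : ℤ) ∣ a j

/-- The invariant subring `A^H`. -/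
noncomputable def subH (n : ℕ) (ω : ℂ) : Subring (MvPolynomial (Fin (n - 1)) ℂ) where
  carrier := {p | ∀ a : Fin (n - 1) → ℤ, Hcond n a → rescale4 n ω a p = p}
  mul_mem' := by intro p q hp hq a ha; rw [map_mul, hp a ha, hq a ha]
  add_mem' := by intro p q hp hq a ha; rw [map_add, hp a ha, hq a ha]
  one_mem' := by intro a ha; rw [map_one]
  zero_mem' := by intro a ha; rw [map_zero]
  neg_mem' := by intro p hp a ha; rw [map_neg, hp a ha]

/-- The invariant subring `A^{H_J}`. -/
noncomputable def subHJ (n : ℕ) (ω : ℂ) (J : Finset (Fin (n - 1))) :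
    Subring (MvPolynomial (Fin (n - 1)) ℂ) where
  carrier := {p | ∀ a : Fin (n - 1) → ℤ, HJcond n J a → rescale4 n ω a p = p}
  mul_mem' := by intro p q hp hq a ha; rw [map_mul, hp a ha, hq a ha]
  add_mem' := by intro p q hp hq a ha; rw [map_add, hp a ha, hq a ha]
  one_mem' := by intro a ha; rw [map_one]
  zero_mem' := by intro a ha; rw [map_zero]
  neg_mem' := by intro p hp a ha; rw [map_neg, hp a ha]

theorem subH_le_subHJ (n : ℕ) (ω : ℂ) (J : Finset (Fin (n - 1))) :
    subH n ω ≤ subHJ n ω J := fun _ hp a ha => hp a ha.1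

/-- The ideal `I = ⟨z_j − ω^{c_j} (j ∈ J), z_k (k ∈ K)⟩`. -/
noncomputable def idealI (n : ℕ) (ω : ℂ) (J K : Finset (Fin (n - 1)))
    (c : Fin (n - 1) → ℕ) : Ideal (MvPolynomial (Fin (n - 1)) ℂ) :=
  Ideal.span ((fun j => (X j : MvPolynomial (Fin (n - 1)) ℂ) - C (ω ^ c j)) '' (J : Set _)
    ∪ (fun k => (X k : MvPolynomial (Fin (n - 1)) ℂ)) '' (K : Set _))

lemma rescale4_monomial (n : ℕ) (ω : ℂ) (a : Fin (n-1) → ℤ) (d : Fin (n-1) →₀ ℕ) (r : ℂ) :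
    rescale4 n ω a (monomial d r)
      = (∏ i : Fin (n-1), ω ^ (a i * (d i : ℤ))) • monomial d r := by
  rw [rescale4, aeval_monomial, Finsupp.prod_fintype _ _ (fun i => pow_zero _)]
  have h : ∀ i : Fin (n-1), ((ω ^ a i) • (X i : MvPolynomial (Fin (n-1)) ℂ)) ^ (d i)
      = C (ω ^ (a i * (d i : ℤ))) * (X i) ^ (d i) := by
    intro i
    rw [smul_pow, smul_eq_C_mul, zpow_mul, zpow_natCast]
  simp_rw [h]
  rw [Finset.prod_mul_distrib, ← map_prod, monomial_eq,
    Finsupp.prod_fintype _ _ (fun i => pow_zero _), smul_eq_C_mul]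
  rw [MvPolynomial.algebraMap_eq]; ring

lemma zpow_finset_sum {ι : Type*} {ω : ℂ} (hω : ω ≠ 0) (s : Finset ι) (f : ι → ℤ) :
    ω ^ (∑ i ∈ s, f i) = ∏ i ∈ s, ω ^ f i := by
  classical
  induction s using Finset.induction_on with
  | empty => simp
  | @insert _ _ h ih => rw [Finset.sum_insert h, Finset.prod_insert h, zpow_add₀ hω, ih]

/-- If `p` is invariant under `rescale4 n ω a` and `d` has nonzero coeff, the scalar is 1. -/
lemma scalar_eq_one_of_invariant (n : ℕ) (ω : ℂ) (a : Fin (n-1) → ℤ)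
    (p : MvPolynomial (Fin (n-1)) ℂ) (hp : rescale4 n ω a p = p)
    (d : Fin (n-1) →₀ ℕ) (hd : coeff d p ≠ 0) :
    (∏ i : Fin (n-1), ω ^ (a i * (d i : ℤ))) = 1 := by
  classical
  have h1 : coeff d (rescale4 n ω a p) = (∏ i : Fin (n-1), ω ^ (a i * (d i : ℤ))) * coeff d p := by
    conv_lhs => rw [p.as_sum, map_sum]
    simp_rw [rescale4_monomial, smul_eq_C_mul, MvPolynomial.coeff_sum, coeff_C_mul, coeff_monomial]
    rw [Finset.sum_eq_single d]
    · simp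
    · intro b _ hb; simp [hb]
    · intro hdd; rw [MvPolynomial.notMem_support_iff] at hdd; exact absurd hdd hd
  rw [hp] at h1
  have h2 : (∏ i : Fin (n-1), ω ^ (a i * (d i : ℤ))) * coeff d p = 1 * coeff d p := by
    rw [one_mul, ← h1]
  exact mul_right_cancel₀ hd h2

lemma finset_gcd_bezout {ι : Type*} [DecidableEq ι] (S : Finset ι) (f : ι → ℤ) :
    ∃ μ : ι → ℤ, (S.gcd f : ℤ) = ∑ i ∈ S, μ i * f i := by
  induction S using Finset.induction_on with
  | empty => exact ⟨fun _ => 0, by simp⟩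
  | @insert a S ha ih =>
    obtain ⟨μ, hμ⟩ := ih
    refine ⟨fun i => if i = a then Int.gcdA (f a) (S.gcd f)
      else Int.gcdB (f a) (S.gcd f) * μ i, ?_⟩
    rw [Finset.gcd_insert, ← Int.coe_gcd, Int.gcd_eq_gcd_ab, Finset.sum_insert ha]
    simp only [eq_self_iff_true, if_true]
    have : ∑ i ∈ S, (if i = a then Int.gcdA (f a) (S.gcd f)
        else Int.gcdB (f a) (S.gcd f) * μ i) * f i
        = Int.gcdB (f a) (S.gcd f) * ∑ i ∈ S, μ i * f i := by
      rw [Finset.mul_sum]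
      refine Finset.sum_congr rfl fun i hi => ?_
      rw [if_neg (by rintro rfl; exact ha hi)]; ring
    rw [this, ← hμ]; ring

lemma exists_lambda (n : ℕ) (hn : 0 < n) (J : Finset (Fin (n-1))) (d : Fin (n-1) → ℤ)
    (H : ∀ a : Fin (n-1) → ℤ, HJcond n J a → (n:ℤ) ∣ ∑ i : Fin (n-1), a i * d i) :
    ∃ lam : ℤ, ∀ i, i ∉ J → (n:ℤ) ∣ d i - lam * (((i:ℕ):ℤ)+1) := by
  classical
  set v : Fin (n-1) → ℤ := fun i => ((i:ℕ):ℤ)+1 with hv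
  set S : Finset (Fin (n-1)) := Jᶜ with hS
  obtain ⟨μ, hμ⟩ := finset_gcd_bezout S v
  set G : ℤ := gcd (n:ℤ) (S.gcd v) with hG
  set A : ℤ := Int.gcdA (n:ℤ) (S.gcd v) with hA
  set B : ℤ := Int.gcdB (n:ℤ) (S.gcd v) with hB
  have hG2 : G = (n:ℤ) * A + (S.gcd v) * B := by
    rw [hG, ← Int.coe_gcd, Int.gcd_eq_gcd_ab]
  set a' : Fin (n-1) → ℤ := fun i => if i ∈ J then 0 else B * μ i with ha'
  have key : ∀ w : Fin (n-1) → ℤ, ∑ x : Fin (n-1), a' x * w x = B * ∑ x ∈ S, μ x * w x := by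
    intro w
    rw [Finset.mul_sum, ← Finset.sum_subset (Finset.subset_univ S)]
    · refine Finset.sum_congr rfl fun x hx => ?_
      rw [hS, Finset.mem_compl] at hx
      simp only [ha', if_neg hx]; ring
    · intro x _ hx
      rw [hS, Finset.mem_compl, not_not] at hx
      simp only [ha', if_pos hx, zero_mul]
  have hva' : ∑ x : Fin (n-1), v x * a' x = G - (n:ℤ) * A := by
    have h1 : ∑ x : Fin (n-1), v x * a' x = ∑ x : Fin (n-1), a' x * v x :=
      Finset.sum_congr rfl fun x _ => mul_comm _ _
    rw [h1, key v, ← hμ]; rw [hG2]; ring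
  have hGn : G ∣ (n:ℤ) := gcd_dvd_left _ _
  have hn0 : (n:ℤ) ≠ 0 := by exact_mod_cast hn.ne'
  have hG0 : G ≠ 0 := by
    intro h0; rw [h0] at hGn; exact hn0 (zero_dvd_iff.mp hGn)
  obtain ⟨m, hm⟩ := hGn
  have hm0 : m ≠ 0 := by rintro rfl; exact hn0 (by rw [hm, mul_zero])
  -- apply H to m • a'
  have hH1 : (n:ℤ) ∣ m * ∑ x : Fin (n-1), a' x * d x := by
    have h := H (fun i => m * a' i) ?_
    · have hr : ∑ i : Fin (n-1), (m * a' i) * d i = m * ∑ x : Fin (n-1), a' x * d x := by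
        rw [Finset.mul_sum]; exact Finset.sum_congr rfl fun i _ => by ring
      rwa [hr] at h
    · constructor
      · show (n:ℤ) ∣ ∑ i : Fin (n-1), (((i:ℕ):ℤ)+1) * (m * a' i)
        have hr : ∑ i : Fin (n-1), (((i:ℕ):ℤ)+1) * (m * a' i)
            = m * ∑ x : Fin (n-1), v x * a' x := by
          rw [Finset.mul_sum]; exact Finset.sum_congr rfl fun i _ => by rw [hv]; ring
        rw [hr, hva', mul_sub, ← mul_comm G m, ← hm]
        exact ⟨1 - m * A, by ring⟩
      · intro j hj; simp only [ha', if_pos hj, mul_zero]; exact dvd_zero _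
  set L : ℤ := ∑ x : Fin (n-1), a' x * d x with hL
  have hGL : G ∣ L := by
    have : G * m ∣ m * L := by rw [← hm]; exact hH1
    rw [mul_comm G m] at this
    exact (mul_dvd_mul_iff_left hm0).mp this
  obtain ⟨lam, hlam⟩ := hGL
  refine ⟨lam, fun i hi => ?_⟩
  obtain ⟨k, hk⟩ : G ∣ v i := dvd_trans (gcd_dvd_right _ _)
    (Finset.gcd_dvd (by rw [hS, Finset.mem_compl]; exact hi))
  -- apply H to b = -e_i + k • a'
  have hH2 := H (fun x => (if x = i then -1 else 0) + k * a' x) ?_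
  · have hr : ∑ x : Fin (n-1), ((if x = i then -1 else 0) + k * a' x) * d x
        = -d i + k * L := by
      rw [hL, Finset.mul_sum]
      have : ∀ x : Fin (n-1), ((if x = i then -1 else 0) + k * a' x) * d x
          = (if x = i then -d x else 0) + k * (a' x * d x) := by
        intro x; split <;> ring
      rw [Finset.sum_congr rfl fun x _ => this x, Finset.sum_add_distrib,
        Finset.sum_ite_eq' Finset.univ i (fun x => -d x), if_pos (Finset.mem_univ i)]
    rw [hr, hlam] at hH2
    have : -d i + k * (G * lam) = -(d i - lam * v i) := by rw [hk]; ring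
    rw [this, dvd_neg] at hH2
    exact hH2
  · constructor
    · show (n:ℤ) ∣ ∑ x : Fin (n-1), (((x:ℕ):ℤ)+1) * ((if x = i then -1 else 0) + k * a' x)
      have hr : ∑ x : Fin (n-1), (((x:ℕ):ℤ)+1) * ((if x = i then -1 else 0) + k * a' x)
          = -v i + k * ∑ x : Fin (n-1), v x * a' x := by
        rw [Finset.mul_sum]
        have : ∀ x : Fin (n-1), (((x:ℕ):ℤ)+1) * ((if x = i then -1 else 0) + k * a' x)
            = (if x = i then -v x else 0) + k * (v x * a' x) := by
          intro x; rw [hv]; split <;> ring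
        rw [Finset.sum_congr rfl fun x _ => this x, Finset.sum_add_distrib,
          Finset.sum_ite_eq' Finset.univ i (fun x => -v x), if_pos (Finset.mem_univ i)]
      rw [hr, hva', hk]
      exact ⟨-(k * A), by ring⟩
    · intro j hj
      have hji : j ≠ i := by rintro rfl; exact hi hj
      simp only [if_neg hji, ha', if_pos hj, mul_zero, zero_add]
      exact dvd_zero _

lemma mk_monomial (n : ℕ) (ω : ℂ) (J K : Finset (Fin (n-1))) (c : Fin (n-1) → ℕ)
    (e : Fin (n-1) →₀ ℕ) (s : ℂ) :
    Ideal.Quotient.mk (idealI n ω J K c) (monomial e s)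
      = Ideal.Quotient.mk (idealI n ω J K c) (C (s * ∏ j ∈ J, ω ^ (c j * e j)))
        * ∏ i ∈ Jᶜ, (Ideal.Quotient.mk (idealI n ω J K c) (X i)) ^ (e i) := by
  classical
  have hX : ∀ j ∈ J, Ideal.Quotient.mk (idealI n ω J K c) (X j)
      = Ideal.Quotient.mk (idealI n ω J K c) (C (ω ^ c j)) := fun j hj =>
    Ideal.Quotient.eq.mpr (Ideal.subset_span (Or.inl ⟨j, hj, rfl⟩))
  rw [monomial_eq, Finsupp.prod_fintype _ _ (fun i => pow_zero _), map_mul, map_prod]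
  rw [← Finset.prod_mul_prod_compl J (fun i => Ideal.Quotient.mk (idealI n ω J K c) ((X i) ^ e i))]
  have h1 : ∏ j ∈ J, Ideal.Quotient.mk (idealI n ω J K c) ((X j) ^ e j)
      = Ideal.Quotient.mk (idealI n ω J K c) (C (∏ j ∈ J, ω ^ (c j * e j))) := by
    rw [map_prod, map_prod]
    refine Finset.prod_congr rfl fun j hj => ?_
    rw [map_pow, hX j hj, ← map_pow, ← C_pow, ← pow_mul]
  rw [h1]
  have h2 : ∏ i ∈ Jᶜ, Ideal.Quotient.mk (idealI n ω J K c) ((X i) ^ e i)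
      = ∏ i ∈ Jᶜ, (Ideal.Quotient.mk (idealI n ω J K c) (X i)) ^ (e i) :=
    Finset.prod_congr rfl fun i _ => map_pow _ _ _
  rw [h2, map_mul, map_mul]
  ring

lemma key_monomial (n : ℕ) (hn : 2 ≤ n) (ω : ℂ) (hω : IsPrimitiveRoot ω n)
    (J K : Finset (Fin (n-1))) (c : Fin (n-1) → ℕ)
    (d : Fin (n-1) →₀ ℕ) (r : ℂ)
    (hd : ∀ a, HJcond n J a → (∏ i : Fin (n-1), ω ^ (a i * (d i : ℤ))) = 1) :
    ∃ q ∈ subH n ω, (monomial d r : MvPolynomial (Fin (n-1)) ℂ) - q ∈ idealI n ω J K c := by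
  classical
  have hn0 : 0 < n := lt_of_lt_of_le two_pos hn
  have hω0 : ω ≠ 0 := hω.ne_zero hn0.ne'
  have H' : ∀ a, HJcond n J a → (n:ℤ) ∣ ∑ i : Fin (n-1), a i * (d i : ℤ) := by
    intro a ha
    have h := hd a ha
    rw [← zpow_finset_sum hω0] at h
    exact (hω.zpow_eq_one_iff_dvd _).mp h
  obtain ⟨lam, hlam⟩ := exists_lambda n hn0 J (fun i => (d i : ℤ)) H'
  set v : Fin (n-1) → ℤ := fun i => ((i:ℕ):ℤ)+1 with hv
  set D' : Fin (n-1) →₀ ℕ := Finsupp.equivFunOnFinite.symm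
    (fun i => if i ∈ J then (lam * v i % (n:ℤ)).toNat else d i) with hD'def
  have hD'app : ∀ i, (D' i : ℕ) = if i ∈ J then (lam * v i % (n:ℤ)).toNat else d i := by
    intro i; rw [hD'def]; rfl
  have hD' : ∀ i, (n:ℤ) ∣ (D' i : ℤ) - lam * v i := by
    intro i
    rw [hD'app i]
    by_cases hi : i ∈ J
    · rw [if_pos hi, Int.toNat_of_nonneg (Int.emod_nonneg _ (by exact_mod_cast hn0.ne'))]
      refine ⟨-(lam * v i / n), ?_⟩
      rw [Int.emod_def]; ring
    · rw [if_neg hi]; exact hlam i hi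
  set tz : ℤ := (∑ j ∈ J, (c j : ℤ) * (d j : ℤ)) - (∑ j ∈ J, (c j : ℤ) * (D' j : ℤ)) with htz
  refine ⟨monomial D' (r * ω ^ tz), ?_, ?_⟩
  · -- membership in subH
    intro a ha
    rw [rescale4_monomial]
    have hdvd : (n:ℤ) ∣ ∑ i : Fin (n-1), a i * (D' i : ℤ) := by
      have hsplit : ∑ i : Fin (n-1), a i * (D' i : ℤ)
          = (∑ i : Fin (n-1), a i * ((D' i : ℤ) - lam * v i))
            + lam * ∑ i : Fin (n-1), v i * a i := by
        rw [Finset.mul_sum, ← Finset.sum_add_distrib]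
        exact Finset.sum_congr rfl fun i _ => by ring
      rw [hsplit]
      refine dvd_add (Finset.dvd_sum fun i _ => (hD' i).mul_left _) ?_
      exact Dvd.dvd.mul_left ha lam
    rw [← zpow_finset_sum hω0, (hω.zpow_eq_one_iff_dvd _).mpr hdvd, one_smul]
  · -- membership in the ideal
    rw [← Ideal.Quotient.eq, mk_monomial, mk_monomial]
    have hsame : ∀ i ∈ Jᶜ, (D' i : ℕ) = d i := by
      intro i hi; rw [hD'app i, if_neg (Finset.mem_compl.mp hi)]
    have hprod : ∏ i ∈ Jᶜ, (Ideal.Quotient.mk (idealI n ω J K c) (X i)) ^ (d i)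
        = ∏ i ∈ Jᶜ, (Ideal.Quotient.mk (idealI n ω J K c) (X i)) ^ (D' i) := by
      refine Finset.prod_congr rfl fun i hi => ?_
      rw [hsame i hi]
    rw [hprod]
    congr 2
    -- scalar identity
    have hz : ∀ (e : Fin (n-1) → ℕ), ∏ j ∈ J, ω ^ (c j * e j)
        = ω ^ (∑ j ∈ J, (c j : ℤ) * (e j : ℤ)) := by
      intro e
      rw [zpow_finset_sum hω0]
      refine Finset.prod_congr rfl fun j _ => ?_
      rw [← zpow_natCast ω (c j * e j)]
      norm_cast
    rw [hz (fun j => d j), hz (fun j => D' j), mul_assoc, ← zpow_add₀ hω0, htz]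
    congr 2
    ring_nf

lemma main_decomp (n : ℕ) (hn : 2 ≤ n) (ω : ℂ) (hω : IsPrimitiveRoot ω n)
    (J K : Finset (Fin (n-1))) (c : Fin (n-1) → ℕ) :
    ∀ p ∈ subHJ n ω J, ∃ q ∈ subH n ω, p - q ∈ idealI n ω J K c := by
  classical
  intro p hp
  have hmono : ∀ dd ∈ p.support, ∃ q ∈ subH n ω,
      (monomial dd (coeff dd p) : MvPolynomial (Fin (n-1)) ℂ) - q ∈ idealI n ω J K c := by
    intro dd hdd
    refine key_monomial n hn ω hω J K c dd _ ?_
    intro a ha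
    exact scalar_eq_one_of_invariant n ω a p (hp a ha) dd (mem_support_iff.mp hdd)
  choose q hq1 hq2 using hmono
  refine ⟨∑ dd ∈ p.support.attach, q dd.1 dd.2, sum_mem (fun dd _ => hq1 dd.1 dd.2), ?_⟩
  have hps : p = ∑ dd ∈ p.support.attach, monomial dd.1 (coeff dd.1 p) := by
    conv_lhs => rw [p.as_sum]
    exact (Finset.sum_attach p.support fun v => monomial v (coeff v p)).symm
  nth_rewrite 1 [hps]
  rw [← Finset.sum_sub_distrib]
  exact Ideal.sum_mem _ (fun dd _ => hq2 dd.1 dd.2)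

/-- The natural ring map `A^H/(I ∩ A^H) → A^{H_J}/(I ∩ A^{H_J})` induced by the inclusion
`A^H ⊆ A^{H_J}` is a ring isomorphism: the composite `A^H → A^{H_J}/(I ∩ A^{H_J})` has
kernel `I ∩ A^H` and is surjective. -/
theorem stmt4 (n : ℕ) (hn : 2 ≤ n) (ω : ℂ) (hω : IsPrimitiveRoot ω n)
    (J K : Finset (Fin (n - 1))) (hJK : Disjoint J K)
    (c : Fin (n - 1) → ℕ) (hc : ∀ j, c j ≤ n - 1) :
    RingHom.ker ((Ideal.Quotient.mk ((idealI n ω J K c).comap (subHJ n ω J).subtype)).comp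
        (Subring.inclusion (subH_le_subHJ n ω J)))
      = (idealI n ω J K c).comap (subH n ω).subtype ∧
    Function.Surjective
      ((Ideal.Quotient.mk ((idealI n ω J K c).comap (subHJ n ω J).subtype)).comp
        (Subring.inclusion (subH_le_subHJ n ω J))) := by
  constructor
  · ext x
    simp only [RingHom.mem_ker, RingHom.comp_apply, Ideal.Quotient.eq_zero_iff_mem,
      Ideal.mem_comap]
    rfl
  · intro y
    obtain ⟨x, rfl⟩ := Ideal.Quotient.mk_surjective y
    obtain ⟨q, hq, hpq⟩ := main_decomp n hn ω hω J K c x.1 x.2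
    refine ⟨⟨q, hq⟩, ?_⟩
    rw [RingHom.comp_apply, Ideal.Quotient.eq, Ideal.mem_comap]
    have heq : (((Subring.inclusion (subH_le_subHJ n ω J)) ⟨q, hq⟩ - x : subHJ n ω J) :
        MvPolynomial (Fin (n-1)) ℂ) = q - x.1 := rfl
    rw [show ((subHJ n ω J).subtype) ((Subring.inclusion (subH_le_subHJ n ω J)) ⟨q, hq⟩ - x)
      = q - x.1 from rfl, ← neg_sub]
    exact neg_mem hpq
end

section
/- Let σ be a row-strict tableau of shape λ ⊢ n and d a divisor of σ. Then |inv(σ)| = D_{λ,d} + |inv(σ/d)|, where D_{λ,d} = ((d−1)/d)·Σ_i (i−1)λ_i. -/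
open scoped Classical

/-- The set of boxes (row, column), 0-indexed, of the Young diagram of a partition given
as a list of row lengths. -/
def cells (L : List ℕ) : Set (ℕ × ℕ) := {p | p.1 < L.length ∧ p.2 < L.getD p.1 0}

/-- `pos` encodes a tableau of shape `L` with entries `1, …, n`:  `pos i` is the (row,
column) of the box labeled `i`.  It is injective on `{1,…,n}` with image the set of
boxes, and is normalized to `(0,0)` outside `{1,…,n}`. -/
def IsTab (L : List ℕ) (n : ℕ) (pos : ℕ → ℕ × ℕ) : Prop :=
  Set.InjOn pos (Set.Icc 1 n) ∧ pos '' Set.Icc 1 n = cells L ∧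
    ∀ i, i ∉ Set.Icc 1 n → pos i = (0, 0)

/-- Row-strictness: entries increase along each row (left to right). -/
def RowStrict (n : ℕ) (pos : ℕ → ℕ × ℕ) : Prop :=
  ∀ i j, i ∈ Set.Icc 1 n → j ∈ Set.Icc 1 n →
    (pos j).1 = (pos i).1 → (pos j).2 = (pos i).2 + 1 → i < j

/-- A row-strict tableau of shape `L` with entries `1, …, n`. -/
def IsRST (L : List ℕ) (n : ℕ) (pos : ℕ → ℕ × ℕ) : Prop :=
  IsTab L n pos ∧ RowStrict n pos

/-- `(i, j)` with `i > j` is a Springer pair: `i` lies in the same column as `j` or in a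
column strictly to its left, and if the box directly right of `j` is labeled `r` then
`i < r`. -/
def SpringerPair (n : ℕ) (pos : ℕ → ℕ × ℕ) (i j : ℕ) : Prop :=
  1 ≤ j ∧ j < i ∧ i ≤ n ∧ (pos i).2 ≤ (pos j).2 ∧
    ∀ r ∈ Set.Icc 1 n, pos r = ((pos j).1, (pos j).2 + 1) → i < r

/-- A Springer inversion is a Springer pair `(i, j)` such that if `i` is in the same
column as `j` then `i` lies strictly below `j`. -/
def SpringerInv (n : ℕ) (pos : ℕ → ℕ × ℕ) (i j : ℕ) : Prop :=
  SpringerPair n pos i j ∧ ((pos i).2 = (pos j).2 → (pos j).1 < (pos i).1)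

/-- The number of Springer pairs of a tableau. -/
noncomputable def pairsCount (n : ℕ) (pos : ℕ → ℕ × ℕ) : ℕ :=
  {p : ℕ × ℕ | SpringerPair n pos p.1 p.2}.ncard

/-- The number of Springer inversions of a tableau. -/
noncomputable def invCount (n : ℕ) (pos : ℕ → ℕ × ℕ) : ℕ :=
  {p : ℕ × ℕ | SpringerInv n pos p.1 p.2}.ncard

/-- `d` is a divisor of the tableau: `d ∣ n` and the tableau decomposes into blocks of
`d` consecutive boxes with consecutive labels, i.e. whenever `d ∤ i` the box labeled
`i + 1` is directly to the right of the box labeled `i`. -/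
def TabDivisor (n d : ℕ) (pos : ℕ → ℕ × ℕ) : Prop :=
  d ∣ n ∧ ∀ i, 1 ≤ i → i < n → ¬ d ∣ i → pos (i + 1) = ((pos i).1, (pos i).2 + 1)

/-- The quotient tableau `σ/d`: each block of `d` boxes is merged into a single box,
labeled in the same relative order (the block containing `d·m` gets label `m`). -/
def quotTab (d : ℕ) (pos : ℕ → ℕ × ℕ) : ℕ → ℕ × ℕ :=
  fun m => ((pos (d * m)).1, ((pos (d * m)).2 + 1) / d - 1)

/-- `Σ_i (i−1)·λ_i`, the dimension of the Springer fiber of Jordan type `λ`. -/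
def dimB (L : List ℕ) : ℕ := ∑ i ∈ Finset.range L.length, i * L.getD i 0

/-- `L` is a partition of `n`: weakly decreasing positive parts summing to `n`. -/
def IsPartition (L : List ℕ) (n : ℕ) : Prop :=
  L.sum = n ∧ L.Pairwise (· ≥ ·) ∧ ∀ x ∈ L, 0 < x

section Aux

variable {L : List ℕ} {n d : ℕ} {σ : ℕ → ℕ × ℕ}

lemma mk_mem_cells {r c : ℕ} : (r, c) ∈ cells L ↔ r < L.length ∧ c < L.getD r 0 := Iff.rfl

lemma pos_cell (hσ : IsTab L n σ) {i : ℕ} (hi : i ∈ Set.Icc 1 n) :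
    (σ i).1 < L.length ∧ (σ i).2 < L.getD (σ i).1 0 := by
  have : σ i ∈ cells L := by rw [← hσ.2.1]; exact ⟨i, hi, rfl⟩
  exact this

lemma exists_label (hσ : IsTab L n σ) {p : ℕ × ℕ} (hp : p ∈ cells L) :
    ∃ i ∈ Set.Icc 1 n, σ i = p := by
  rw [← hσ.2.1] at hp; obtain ⟨i, hi, h⟩ := hp; exact ⟨i, hi, h⟩

lemma blk_chain (hdiv : TabDivisor n d σ) {i : ℕ} (t : ℕ) (h1 : 1 ≤ i) (h2 : i + t ≤ n)
    (h3 : ∀ s < t, ¬ d ∣ (i + s)) :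
    σ (i + t) = ((σ i).1, (σ i).2 + t) := by
  induction t with
  | zero => simp
  | succ t ih =>
    have hit : σ (i + t) = ((σ i).1, (σ i).2 + t) :=
      ih (by omega) (fun s hs => h3 s (by omega))
    have h4 := hdiv.2 (i + t) (by omega) (by omega) (h3 t (by omega))
    rw [← Nat.add_assoc, h4, hit]; rfl

lemma blk_start (hd : 0 < d) (hdiv : TabDivisor n d σ) {s t : ℕ} (hs : 1 ≤ s)
    (hmod : (s - 1) % d = 0) (ht : t < d) (hn : s + t ≤ n) :
    σ (s + t) = ((σ s).1, (σ s).2 + t) := by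
  apply blk_chain hdiv t hs hn
  intro u hu hdvd
  have hds : d ∣ (s - 1) := Nat.dvd_of_mod_eq_zero hmod
  have hdq : d ∣ (u + 1) := by
    have h5 : u + 1 = (s + u) - (s - 1) := by omega
    rw [h5]
    exact Nat.dvd_sub hdvd hds
  have := Nat.le_of_dvd (by omega) hdq
  omega

lemma rowMono (hσ : IsRST L n σ) :
    ∀ (k : ℕ) (a b : ℕ), a ∈ Set.Icc 1 n → b ∈ Set.Icc 1 n → (σ b).1 = (σ a).1 →
      (σ b).2 = (σ a).2 + k → a ≤ b := by
  intro k
  induction k with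
  | zero =>
    intro a b ha hb h1 h2
    exact le_of_eq (hσ.1.1 ha hb (Prod.ext h1.symm (by omega)))
  | succ k ih =>
    intro a b ha hb h1 h2
    have hb' := pos_cell hσ.1 hb
    have hc : ((σ a).1, (σ a).2 + k) ∈ cells L := by
      rw [mk_mem_cells]
      refine ⟨by rw [← h1]; exact hb'.1, ?_⟩
      have := hb'.2; rw [h1, h2] at this; omega
    obtain ⟨t, ht, hts⟩ := exists_label hσ.1 hc
    have hat : a ≤ t := ih a t ha ht (by rw [hts]) (by rw [hts])
    have htb : t < b := hσ.2 t b ht hb (by rw [hts, h1]) (by rw [hts]; show (σ b).2 = (σ a).2 + k + 1; omega)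
    omega

lemma align (hσ : IsRST L n σ) (hd : 0 < d) (hdiv : TabDivisor n d σ) :
    ∀ i ∈ Set.Icc 1 n, (σ i).2 % d = (i - 1) % d := by
  suffices H : ∀ c i, i ∈ Set.Icc 1 n → (σ i).2 = c → (σ i).2 % d = (i - 1) % d by
    intro i hi; exact H _ i hi rfl
  intro c
  induction c using Nat.strong_induction_on with
  | _ c IH =>
  intro i hi hc
  simp only [Set.mem_Icc] at hi
  set t := (i - 1) % d with hti
  have htd : t < d := Nat.mod_lt _ hd
  obtain ⟨q, hq⟩ : ∃ q, i - 1 = d * q + t :=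
    ⟨(i - 1) / d, by rw [hti]; exact (Nat.div_add_mod (i - 1) d).symm⟩
  -- block start s = i - t = d*q + 1
  set s := d * q + 1 with hsdef
  have hsval : s = i - t := by omega
  have hsmod : (s - 1) % d = 0 := by simp [hsdef, Nat.mul_mod_right]
  have hblk : σ (s + t) = ((σ s).1, (σ s).2 + t) :=
    blk_start hd hdiv (by omega) hsmod htd (by omega)
  have hst : s + t = i := by omega
  rw [hst] at hblk
  set c0 := (σ s).2 with hc0def
  have hceq : (σ i).2 = c0 + t := by rw [hblk]
  suffices hdc0 : d ∣ c0 by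
    obtain ⟨e, he⟩ := hdc0
    rw [hceq, he, add_comm (d * e) t, Nat.add_mul_mod_self_left, Nat.mod_eq_of_lt htd]
  rcases Nat.eq_zero_or_pos c0 with h0 | h0
  · simp [h0]
  · have hscell := pos_cell hσ.1 (Set.mem_Icc.2 ⟨by omega, by omega⟩ : s ∈ Set.Icc 1 n)
    have hcell' : ((σ s).1, c0 - 1) ∈ cells L := by
      rw [mk_mem_cells]
      exact ⟨hscell.1, by have := hscell.2; omega⟩
    obtain ⟨i', hi', hσi'⟩ := exists_label hσ.1 hcell'
    have hi'm := Set.mem_Icc.1 hi'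
    set t' := (i' - 1) % d with ht'i
    have ht'd : t' < d := Nat.mod_lt _ hd
    obtain ⟨q', hq'⟩ : ∃ q', i' - 1 = d * q' + t' :=
      ⟨(i' - 1) / d, by rw [ht'i]; exact (Nat.div_add_mod (i' - 1) d).symm⟩
    set s' := d * q' + 1 with hs'def
    have hs'mod : (s' - 1) % d = 0 := by simp [hs'def, Nat.mul_mod_right]
    have hblk' : σ (s' + t') = ((σ s').1, (σ s').2 + t') :=
      blk_start hd hdiv (by omega) hs'mod ht'd (by omega)
    have hs't : s' + t' = i' := by omega
    rw [hs't] at hblk'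
    have hcol' : (σ s').2 + t' = c0 - 1 := by
      have := congrArg Prod.snd hblk'
      rw [hσi'] at this
      exact this.symm
    by_cases hcase : t' = d - 1
    · have hIH := IH (σ s').2 (by omega) s' (Set.mem_Icc.2 ⟨by omega, by omega⟩) rfl
      rw [show s' - 1 = d * q' from by omega, Nat.mul_mod_right] at hIH
      obtain ⟨e, he⟩ := Nat.dvd_of_mod_eq_zero hIH
      refine ⟨e + 1, ?_⟩
      have hms : d * (e + 1) = d * e + d := Nat.mul_succ d e
      omega
    · exfalso
      have hnd : ¬ d ∣ i' := by
        intro hdvd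
        have h6 : d ∣ t' + 1 := by
          have h5 : t' + 1 = i' - (d * q') := by omega
          rw [h5]
          exact Nat.dvd_sub hdvd (Dvd.intro q' rfl)
        have := Nat.le_of_dvd (by omega) h6
        omega
      have hlt : i' < n := by
        rcases Nat.lt_or_ge i' n with h | h
        · exact h
        · exfalso; apply hnd; have : i' = n := by omega
          rw [this]; exact hdiv.1
      have hstep := hdiv.2 i' (by omega) hlt hnd
      rw [hσi'] at hstep
      have heq : σ (i' + 1) = σ s := by
        rw [hstep]
        exact Prod.ext rfl (by show c0 - 1 + 1 = (σ s).2; omega)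
      have hieq : i' + 1 = s :=
        hσ.1.1 (Set.mem_Icc.2 ⟨by omega, by omega⟩) (Set.mem_Icc.2 ⟨by omega, by omega⟩) heq
      have h7 : d ∣ t' + 1 := by
        have h8 : t' + 1 = s - 1 - d * q' := by omega
        rw [h8]
        exact Nat.dvd_sub (Nat.dvd_of_mod_eq_zero hsmod) (Dvd.intro q' rfl)
      have := Nat.le_of_dvd (by omega) h7
      omega
lemma quot_spec (hσ : IsRST L n σ) (hd : 0 < d) (hdiv : TabDivisor n d σ) {m : ℕ}
    (hm : 1 ≤ m) (hmn : d * m ≤ n) :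
    ∃ k, (σ (d * m)).2 = d * k + (d - 1) ∧ quotTab d σ m = ((σ (d * m)).1, k) ∧
      ∀ t < d, σ (d * (m - 1) + 1 + t) = ((σ (d * m)).1, d * k + t) := by
  obtain ⟨m', rfl⟩ : ∃ m', m = m' + 1 := ⟨m - 1, by omega⟩
  have hmul : d * (m' + 1) = d * m' + d := by ring
  have hdm : d * (m' + 1) ∈ Set.Icc 1 n := Set.mem_Icc.2 ⟨by omega, hmn⟩
  have hal := align hσ hd hdiv _ hdm
  have hrhs : (d * (m' + 1) - 1) % d = d - 1 := by
    rw [show d * (m' + 1) - 1 = (d - 1) + d * m' from by omega, Nat.add_mul_mod_self_left,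
      Nat.mod_eq_of_lt (by omega)]
  rw [hrhs] at hal
  have hdiv_add := Nat.div_add_mod (σ (d * (m' + 1))).2 d
  have hend := blk_start (σ := σ) hd hdiv (s := d * m' + 1) (t := d - 1) (by omega)
    (by rw [Nat.add_sub_cancel]; exact Nat.mul_mod_right d m') (by omega) (by omega)
  have hidx : d * m' + 1 + (d - 1) = d * (m' + 1) := by omega
  rw [hidx] at hend
  have hendfst := congrArg Prod.fst hend
  have hendsnd := congrArg Prod.snd hend
  simp only at hendfst hendsnd
  refine ⟨(σ (d * (m' + 1))).2 / d, by omega, ?_, ?_⟩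
  · show ((σ (d * (m' + 1))).1, ((σ (d * (m' + 1))).2 + 1) / d - 1) = _
    have h1 : (σ (d * (m' + 1))).2 + 1 = d * ((σ (d * (m' + 1))).2 / d + 1) := by
      have h2 : d * ((σ (d * (m' + 1))).2 / d + 1) = d * ((σ (d * (m' + 1))).2 / d) + d := by
        ring
      omega
    rw [h1, Nat.mul_div_cancel_left _ hd, Nat.add_sub_cancel]
  · intro t ht
    have hs := blk_start (σ := σ) hd hdiv (s := d * m' + 1) (t := t) (by omega)
      (by rw [Nat.add_sub_cancel]; exact Nat.mul_mod_right d m') ht (by omega)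
    rw [show d * (m' + 1 - 1) = d * m' from by rw [Nat.add_sub_cancel], hs]
    refine Prod.ext hendfst.symm ?_
    show (σ (d * m' + 1)).2 + t = d * ((σ (d * (m' + 1))).2 / d) + t
    omega

lemma dvd_parts (hσ : IsRST L n σ) (hd : 0 < d) (hdiv : TabDivisor n d σ) :
    ∀ r < L.length, d ∣ L.getD r 0 := by
  intro r hr
  rcases Nat.eq_zero_or_pos (L.getD r 0) with h0 | h0
  · rw [h0]; exact dvd_zero d
  have hcell : (r, L.getD r 0 - 1) ∈ cells L := mk_mem_cells.2 ⟨hr, by omega⟩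
  obtain ⟨i, hi, hσi⟩ := exists_label hσ.1 hcell
  have hal := align hσ hd hdiv i hi
  simp only [Set.mem_Icc] at hi
  rw [hσi] at hal
  have htlt : (i - 1) % d < d := Nat.mod_lt _ hd
  have hq := Nat.div_add_mod (i - 1) d
  by_cases hend : (i - 1) % d = d - 1
  · refine ⟨(L.getD r 0 - 1) / d + 1, ?_⟩
    have h14 := Nat.div_add_mod (L.getD r 0 - 1) d
    have h15 : d * ((L.getD r 0 - 1) / d + 1) = d * ((L.getD r 0 - 1) / d) + d := by ring
    simp only at hal
    omega
  · exfalso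
    have hnd : ¬ d ∣ i := by
      intro hdvd
      have h6 : d ∣ (i - 1) % d + 1 := by
        have h5 : (i - 1) % d + 1 = i - d * ((i - 1) / d) := by omega
        rw [h5]; exact Nat.dvd_sub hdvd (Dvd.intro _ rfl)
      have := Nat.le_of_dvd (by omega) h6
      omega
    have hlt : i < n := by
      rcases Nat.lt_or_ge i n with h | h
      · exact h
      · exact absurd (by rw [show i = n from by omega]; exact hdiv.1) hnd
    have hstep := hdiv.2 i (by omega) hlt hnd
    rw [hσi] at hstep
    have hc := pos_cell hσ.1 (Set.mem_Icc.2 ⟨by omega, by omega⟩ : i + 1 ∈ Set.Icc 1 n)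
    rw [hstep] at hc
    simp only at hc
    omega

lemma quot_RST (hσ : IsRST L n σ) (hd : 0 < d) (hdiv : TabDivisor n d σ) :
    IsRST (L.map (· / d)) (n / d) (quotTab d σ) := by
  have hg : ∀ r, (L.map (· / d)).getD r 0 = L.getD r 0 / d := fun r => by
    simpa using List.getD_map L 0 (n := r) (· / d)
  have hIcc : ∀ m, 1 ≤ m → m ≤ n / d → d * m ∈ Set.Icc 1 n := by
    intro m h1 h2
    refine Set.mem_Icc.2 ⟨Nat.mul_pos hd h1, ?_⟩
    rw [mul_comm]
    exact (Nat.le_div_iff_mul_le hd).1 h2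
  have hinj : Set.InjOn (quotTab d σ) (Set.Icc 1 (n / d)) := by
    intro m1 h1 m2 h2 heq
    have h1' := Set.mem_Icc.1 h1
    have h2' := Set.mem_Icc.1 h2
    obtain ⟨k1, hcol1, hq1, _⟩ := quot_spec hσ hd hdiv h1'.1
      ((Set.mem_Icc.1 (hIcc m1 h1'.1 h1'.2)).2)
    obtain ⟨k2, hcol2, hq2, _⟩ := quot_spec hσ hd hdiv h2'.1
      ((Set.mem_Icc.1 (hIcc m2 h2'.1 h2'.2)).2)
    rw [hq1, hq2] at heq
    obtain ⟨hrow, hk⟩ := Prod.mk.inj heq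
    have hpos : σ (d * m1) = σ (d * m2) := Prod.ext hrow (by rw [hcol1, hcol2, hk])
    have := hσ.1.1 (hIcc m1 h1'.1 h1'.2) (hIcc m2 h2'.1 h2'.2) hpos
    exact Nat.eq_of_mul_eq_mul_left hd this
  have himg : quotTab d σ '' Set.Icc 1 (n / d) = cells (L.map (· / d)) := by
    ext p
    obtain ⟨r, k⟩ := p
    constructor
    · rintro ⟨m, hm, hqm⟩
      have hm' := Set.mem_Icc.1 hm
      have hmn := (Set.mem_Icc.1 (hIcc m hm'.1 hm'.2)).2
      obtain ⟨kk, hcol, hq, _⟩ := quot_spec hσ hd hdiv hm'.1 hmn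
      rw [hq] at hqm
      obtain ⟨hrr, hkk⟩ := Prod.mk.inj hqm
      have hcell := pos_cell hσ.1 (hIcc m hm'.1 hm'.2)
      rw [mk_mem_cells]
      refine ⟨by rw [List.length_map, ← hrr]; exact hcell.1, ?_⟩
      rw [hg, ← hrr, ← hkk]
      have h11 : (kk + 1) * d ≤ L.getD (σ (d * m)).1 0 := by
        have h12 : (kk + 1) * d = d * kk + d := by ring
        have h13 := hcell.2
        omega
      exact (Nat.le_div_iff_mul_le hd).2 h11
    · intro hp
      rw [mk_mem_cells] at hp
      have hr : r < L.length := by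
        have := hp.1; rwa [List.length_map] at this
      have hk : k < L.getD r 0 / d := by
        have := hp.2; rwa [hg] at this
      have hcell : (r, d * k + (d - 1)) ∈ cells L := by
        rw [mk_mem_cells]
        refine ⟨hr, ?_⟩
        have h11 : (k + 1) * d ≤ L.getD r 0 := (Nat.le_div_iff_mul_le hd).1 hk
        have h12 : (k + 1) * d = d * k + d := by ring
        omega
      obtain ⟨i, hi, hσi⟩ := exists_label hσ.1 hcell
      have hal := align hσ hd hdiv i hi
      simp only [Set.mem_Icc] at hi
      rw [hσi] at hal
      simp only at hal
      have h13 : (d * k + (d - 1)) % d = d - 1 := by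
        rw [add_comm, Nat.add_mul_mod_self_left, Nat.mod_eq_of_lt (by omega)]
      have hdi : d ∣ i := by
        have h14 := Nat.div_add_mod (i - 1) d
        refine ⟨(i - 1) / d + 1, ?_⟩
        have h15 : d * ((i - 1) / d + 1) = d * ((i - 1) / d) + d := by ring
        omega
      obtain ⟨m, rfl⟩ := hdi
      have hm1 : 1 ≤ m := by
        rcases Nat.eq_zero_or_pos m with h | h
        · rw [h, Nat.mul_zero] at hi; omega
        · exact h
      have hm2 : m ≤ n / d := (Nat.le_div_iff_mul_le hd).2 (by rw [mul_comm]; exact hi.2)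
      refine ⟨m, Set.mem_Icc.2 ⟨hm1, hm2⟩, ?_⟩
      obtain ⟨k', hcol', hq', _⟩ := quot_spec hσ hd hdiv hm1 hi.2
      rw [hq']
      have hrow : (σ (d * m)).1 = r := congrArg Prod.fst hσi
      have hkk : k' = k := by
        have hsnd : (σ (d * m)).2 = d * k + (d - 1) := congrArg Prod.snd hσi
        have h16 : d * k' = d * k := by omega
        exact Nat.eq_of_mul_eq_mul_left hd h16
      rw [hrow, hkk]
  have hout : ∀ m, m ∉ Set.Icc 1 (n / d) → quotTab d σ m = (0, 0) := by
    intro m hm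
    simp only [Set.mem_Icc, not_and_or, not_le] at hm
    have h0 : σ (d * m) = (0, 0) := by
      apply hσ.1.2.2
      simp only [Set.mem_Icc, not_and_or, not_le]
      rcases hm with h | h
      · left; rw [show m = 0 from by omega, Nat.mul_zero]; omega
      · right
        have h18 : d * (n / d + 1) ≤ d * m := Nat.mul_le_mul_left d (by omega)
        have h19 : d * (n / d + 1) = d * (n / d) + d := by ring
        have h20 : d * (n / d) = n := Nat.mul_div_cancel' hdiv.1
        omega
    show ((σ (d * m)).1, ((σ (d * m)).2 + 1) / d - 1) = (0, 0)
    rw [h0]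
    have h21 : (1 : ℕ) / d ≤ 1 := Nat.div_le_self 1 d
    refine Prod.ext rfl ?_
    have h22 : (1 : ℕ) / d - 1 = 0 := by
      generalize (1 : ℕ) / d = e at h21
      omega
    show ((0 : ℕ) + 1) / d - 1 = 0
    exact h22
  have hrs : RowStrict (n / d) (quotTab d σ) := by
    intro m' m h1 h2 hrow hcol
    have h1' := Set.mem_Icc.1 h1
    have h2' := Set.mem_Icc.1 h2
    have hmn1 := (Set.mem_Icc.1 (hIcc m' h1'.1 h1'.2)).2
    have hmn2 := (Set.mem_Icc.1 (hIcc m h2'.1 h2'.2)).2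
    obtain ⟨k1, hcol1, hq1, hblk1⟩ := quot_spec hσ hd hdiv h1'.1 hmn1
    obtain ⟨k2, hcol2, hq2, hblk2⟩ := quot_spec hσ hd hdiv h2'.1 hmn2
    rw [hq1, hq2] at hrow hcol
    simp only at hrow hcol
    have hstart := hblk2 0 hd
    have h23 : d * (m - 1) + d = d * m := by
      rw [← Nat.mul_succ]; congr 1; omega
    have hlt := hσ.2 (d * m') (d * (m - 1) + 1 + 0) (hIcc m' h1'.1 h1'.2)
      (Set.mem_Icc.2 ⟨by omega, by omega⟩)
      (by rw [hstart]; exact hrow)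
      (by rw [hstart]; show d * k2 + 0 = (σ (d * m')).2 + 1
          have h24 : d * k2 = d * (k1 + 1) := by rw [hcol]
          have h25 : d * (k1 + 1) = d * k1 + d := by ring
          omega)
    have : d * m' < d * m := by omega
    exact Nat.lt_of_mul_lt_mul_left this
  exact ⟨⟨hinj, himg, hout⟩, hrs⟩

lemma getD_anti (hsort : L.Pairwise (· ≥ ·)) {r1 r2 : ℕ} (h : r2 ≤ r1) (hr : r1 < L.length) :
    L.getD r1 0 ≤ L.getD r2 0 := by
  rcases eq_or_lt_of_le h with rfl | h'
  · exact le_refl _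
  · rw [List.getD_eq_getElem L 0 hr, List.getD_eq_getElem L 0 (lt_trans h' hr)]
    exact hsort.rel_get_of_lt (a := ⟨r2, lt_trans h' hr⟩) (b := ⟨r1, hr⟩) h'

lemma pairs_eq (hsort : L.Pairwise (· ≥ ·)) (hσ : IsRST L n σ) :
    pairsCount n σ = dimB L := by
  classical
  have hcontra : ∀ i j j', SpringerPair n σ i j → SpringerPair n σ i j' →
      (σ j').1 = (σ j).1 → j < j' → False := by
    intro i j j' hp hp' hrow hlt
    obtain ⟨hj1, hji, hin, hcol, hrt⟩ := hp
    obtain ⟨hj1', hji', hin', hcol', hrt'⟩ := hp'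
    have hjI : j ∈ Set.Icc 1 n := Set.mem_Icc.2 ⟨hj1, by omega⟩
    have hj'I : j' ∈ Set.Icc 1 n := Set.mem_Icc.2 ⟨hj1', by omega⟩
    have hcc : (σ j).2 < (σ j').2 := by
      by_contra hcc
      push_neg at hcc
      have := rowMono hσ ((σ j).2 - (σ j').2) j' j hj'I hjI hrow.symm
        (by show (σ j).2 = (σ j').2 + ((σ j).2 - (σ j').2); omega)
      omega
    have hj'cell := pos_cell hσ.1 hj'I
    have hcell : ((σ j).1, (σ j).2 + 1) ∈ cells L := by
      rw [mk_mem_cells]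
      refine ⟨by rw [← hrow]; exact hj'cell.1, ?_⟩
      have := hj'cell.2
      rw [hrow] at this
      omega
    obtain ⟨r, hrI, hrpos⟩ := exists_label hσ.1 hcell
    have hir : i < r := hrt r hrI hrpos
    have hrj' : r ≤ j' := rowMono hσ ((σ j').2 - (σ j).2 - 1) r j' hrI hj'I
      (by rw [hrpos]; exact hrow)
      (by rw [hrpos]; show (σ j').2 = (σ j).2 + 1 + ((σ j').2 - (σ j).2 - 1); omega)
    omega
  have hFbij : Set.BijOn (fun p : ℕ × ℕ => ((σ p.1).1, (σ p.1).2, (σ p.2).1))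
      {p : ℕ × ℕ | SpringerPair n σ p.1 p.2}
      {x : ℕ × ℕ × ℕ | ∃ a ∈ Set.Icc 1 n, ∃ b ∈ Set.Icc 1 n,
        σ a = (x.1, x.2.1) ∧ σ b = (x.2.2, x.2.1) ∧ b < a} := by
    refine ⟨?_, ?_, ?_⟩
    · rintro ⟨i, j⟩ hp
      have hp0 : SpringerPair n σ i j := hp
      obtain ⟨hj1, hji, hin, hcol, hrt⟩ := hp0
      have hiI : i ∈ Set.Icc 1 n := Set.mem_Icc.2 ⟨by omega, hin⟩
      have hjI : j ∈ Set.Icc 1 n := Set.mem_Icc.2 ⟨hj1, by omega⟩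
      have hjc := pos_cell hσ.1 hjI
      have hcell : ((σ j).1, (σ i).2) ∈ cells L := mk_mem_cells.2 ⟨hjc.1, by
        have := hjc.2; omega⟩
      obtain ⟨b, hbI, hbpos⟩ := exists_label hσ.1 hcell
      have hbj : b ≤ j := rowMono hσ ((σ j).2 - (σ i).2) b j hbI hjI
        (by rw [hbpos])
        (by rw [hbpos]; show (σ j).2 = (σ i).2 + ((σ j).2 - (σ i).2); omega)
      exact ⟨i, hiI, b, hbI, Prod.mk.eta.symm, hbpos, by omega⟩
    · rintro ⟨i, j⟩ hp ⟨i', j'⟩ hp' heq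
      simp only [Prod.mk.injEq] at heq
      obtain ⟨h1, h2, h3⟩ := heq
      have hp0 : SpringerPair n σ i j := hp
      have hp0' : SpringerPair n σ i' j' := hp'
      obtain ⟨ha1, ha2, ha3, ha4, ha5⟩ := hp0
      obtain ⟨hb1, hb2, hb3, hb4, hb5⟩ := hp0'
      have hp0 : SpringerPair n σ i j := hp
      have hp0' : SpringerPair n σ i' j' := hp'
      have hiI : i ∈ Set.Icc 1 n := Set.mem_Icc.2 ⟨by omega, ha3⟩
      have hiI' : i' ∈ Set.Icc 1 n := Set.mem_Icc.2 ⟨by omega, hb3⟩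
      have hii : i = i' := hσ.1.1 hiI hiI' (Prod.ext h1 h2)
      subst hii
      have hjj : j = j' := by
        rcases lt_trichotomy j j' with h | h | h
        · exact (hcontra i j j' hp0 hp0' h3.symm h).elim
        · exact h
        · exact (hcontra i j' j hp0' hp0 h3 h).elim
      rw [hjj]
    · rintro ⟨r1, c, r2⟩ hx
      obtain ⟨a, haI, b, hbI, hapos0, hbpos0, hba⟩ := hx
      have hapos : σ a = (r1, c) := hapos0
      have hbpos : σ b = (r2, c) := hbpos0
      have hbc0 := pos_cell hσ.1 hbI
      rw [hbpos] at hbc0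
      have hbc : r2 < L.length ∧ c < L.getD r2 0 := hbc0
      set D : Finset ℕ := (Finset.range (L.getD r2 0)).filter
        (fun c' => c ≤ c' ∧ ∃ b' ∈ Set.Icc 1 n, σ b' = (r2, c') ∧ b' < a) with hD
      have hcD : c ∈ D := by
        refine Finset.mem_filter.2 ⟨Finset.mem_range.2 hbc.2, le_refl c, b, hbI, hbpos, hba⟩
      have hne : D.Nonempty := ⟨c, hcD⟩
      have hcmD := Finset.mem_filter.1 (D.max'_mem hne)
      obtain ⟨hcmlt0, hccm, j, hjI, hjpos, hja⟩ := hcmD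
      have hcmlt := Finset.mem_range.1 hcmlt0
      refine ⟨(a, j), ?_, ?_⟩
      · show SpringerPair n σ a j
        refine ⟨(Set.mem_Icc.1 hjI).1, hja, (Set.mem_Icc.1 haI).2, ?_, ?_⟩
        · rw [hapos, hjpos]; exact hccm
        · intro r hrI hrpos
          rw [hjpos] at hrpos
          simp only at hrpos
          rcases lt_trichotomy r a with h | h | h
          · exfalso
            have hrc := pos_cell hσ.1 hrI
            rw [hrpos] at hrc
            simp only at hrc
            have hmem : D.max' hne + 1 ∈ D :=
              Finset.mem_filter.2 ⟨Finset.mem_range.2 hrc.2, by omega, r, hrI, hrpos, h⟩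
            have := D.le_max' _ hmem
            omega
          · exfalso
            subst h
            rw [hapos] at hrpos
            have := Prod.mk.inj hrpos
            omega
          · exact h
      · show ((σ a).1, (σ a).2, (σ j).1) = (r1, c, r2)
        rw [hapos, hjpos]
  have hHbij : Set.BijOn
      (fun x : ℕ × ℕ × ℕ => if x.2.2 < x.1 then x else (x.2.2, x.2.1, x.1))
      {x : ℕ × ℕ × ℕ | ∃ a ∈ Set.Icc 1 n, ∃ b ∈ Set.Icc 1 n,
        σ a = (x.1, x.2.1) ∧ σ b = (x.2.2, x.2.1) ∧ b < a}
      {x : ℕ × ℕ × ℕ | x.1 < L.length ∧ x.2.1 < L.getD x.1 0 ∧ x.2.2 < x.1} := by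
    refine ⟨?_, ?_, ?_⟩
    · rintro ⟨r1, c, r2⟩ hx
      obtain ⟨a, haI, b, hbI, hapos0, hbpos0, hba⟩ := hx
      have hapos : σ a = (r1, c) := hapos0
      have hbpos : σ b = (r2, c) := hbpos0
      have hac0 := pos_cell hσ.1 haI
      rw [hapos] at hac0
      have hac : r1 < L.length ∧ c < L.getD r1 0 := hac0
      have hbc0 := pos_cell hσ.1 hbI
      rw [hbpos] at hbc0
      have hbc : r2 < L.length ∧ c < L.getD r2 0 := hbc0
      have hne12 : r1 ≠ r2 := by
        intro h
        subst h
        have : a = b := hσ.1.1 haI hbI (by rw [hapos, hbpos])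
        omega
      simp only [Set.mem_setOf_eq]
      by_cases hcase : r2 < r1
      · rw [if_pos hcase]; exact ⟨hac.1, hac.2, hcase⟩
      · rw [if_neg hcase]
        refine ⟨hbc.1, hbc.2, ?_⟩
        show r1 < r2
        omega
    · rintro ⟨r1, c, r2⟩ hx ⟨r1', c', r2'⟩ hx' heq
      obtain ⟨a, haI, b, hbI, hapos0, hbpos0, hba⟩ := hx
      obtain ⟨a', haI', b', hbI', hapos0', hbpos0', hba'⟩ := hx'
      have hapos : σ a = (r1, c) := hapos0
      have hbpos : σ b = (r2, c) := hbpos0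
      have hapos' : σ a' = (r1', c') := hapos0'
      have hbpos' : σ b' = (r2', c') := hbpos0'
      have hne12 : r1 ≠ r2 := by
        intro h; subst h
        have : a = b := hσ.1.1 haI hbI (by rw [hapos, hbpos])
        omega
      have hne12' : r1' ≠ r2' := by
        intro h; subst h
        have : a' = b' := hσ.1.1 haI' hbI' (by rw [hapos', hbpos'])
        omega
      simp only at heq
      by_cases h1 : r2 < r1 <;> by_cases h2 : r2' < r1'
      · rw [if_pos h1, if_pos h2] at heq; exact heq
      · rw [if_pos h1, if_neg h2] at heq
        simp only [Prod.mk.injEq] at heq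
        obtain ⟨e1, e2, e3⟩ := heq
        exfalso
        have ea : a' = b := hσ.1.1 haI' hbI
          (by rw [hapos', hbpos]; show (r1', c') = (r2, c); rw [e3, e2])
        have eb : b' = a := hσ.1.1 hbI' haI
          (by rw [hbpos', hapos]; show (r2', c') = (r1, c); rw [← e1, ← e2])
        omega
      · rw [if_neg h1, if_pos h2] at heq
        simp only [Prod.mk.injEq] at heq
        obtain ⟨e1, e2, e3⟩ := heq
        exfalso
        have ea : a = b' := hσ.1.1 haI hbI'
          (by rw [hapos, hbpos']; show (r1, c) = (r2', c'); rw [e3, e2])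
        have eb : b = a' := hσ.1.1 hbI haI'
          (by rw [hbpos, hapos']; show (r2, c) = (r1', c'); rw [e1, e2])
        omega
      · rw [if_neg h1, if_neg h2] at heq
        simp only [Prod.mk.injEq] at heq
        obtain ⟨e1, e2, e3⟩ := heq
        simp only [Prod.mk.injEq]
        exact ⟨e3, e2, e1⟩
    · rintro ⟨r1, c, r2⟩ hx
      have hx0 : r1 < L.length ∧ c < L.getD r1 0 ∧ r2 < r1 := hx
      obtain ⟨hr1, hc, hr2⟩ := hx0
      have hc1 : (r1, c) ∈ cells L := mk_mem_cells.2 ⟨hr1, hc⟩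
      have hc2 : (r2, c) ∈ cells L := mk_mem_cells.2 ⟨by omega,
        lt_of_lt_of_le hc (getD_anti hsort (le_of_lt hr2) hr1)⟩
      obtain ⟨a, haI, hapos⟩ := exists_label hσ.1 hc1
      obtain ⟨b, hbI, hbpos⟩ := exists_label hσ.1 hc2
      have hab : a ≠ b := by
        intro h
        subst h
        rw [hapos] at hbpos
        have := Prod.mk.inj hbpos
        omega
      by_cases hba : b < a
      · refine ⟨(r1, c, r2), ⟨a, haI, b, hbI, hapos, hbpos, hba⟩, ?_⟩
        simp only
        rw [if_pos hr2]
      · refine ⟨(r2, c, r1), ⟨b, hbI, a, haI, hbpos, hapos, by omega⟩, ?_⟩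
        simp only
        rw [if_neg (by omega)]
  have hS2card : ({x : ℕ × ℕ × ℕ | x.1 < L.length ∧ x.2.1 < L.getD x.1 0 ∧ x.2.2 < x.1}).ncard
      = dimB L := by
    have hset : {x : ℕ × ℕ × ℕ | x.1 < L.length ∧ x.2.1 < L.getD x.1 0 ∧ x.2.2 < x.1}
        = ↑((Finset.range L.length).biUnion fun r1 =>
          {r1} ×ˢ ((Finset.range (L.getD r1 0)) ×ˢ (Finset.range r1))) := by
      ext ⟨r1, c, r2⟩
      simp only [Set.mem_setOf_eq, Finset.mem_coe, Finset.mem_biUnion,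
        Finset.mem_range, Finset.mem_product, Finset.mem_singleton]
      constructor
      · rintro ⟨h1, h2, h3⟩
        exact ⟨r1, h1, rfl, h2, h3⟩
      · rintro ⟨a, ha, rfl, h2, h3⟩
        exact ⟨ha, h2, h3⟩
    rw [hset, Set.ncard_coe_finset, Finset.card_biUnion]
    · unfold dimB
      apply Finset.sum_congr rfl
      intro i _
      rw [Finset.card_product, Finset.card_product]
      simp only [Finset.card_singleton, Finset.card_range]
      ring
    · intro x hx y hy hxy
      rw [Function.onFun, Finset.disjoint_left]
      rintro ⟨a, bc⟩ hmem hmem'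
      rw [Finset.mem_product] at hmem hmem'
      rw [Finset.mem_singleton] at *
      exact hxy (hmem.1.symm.trans hmem'.1)
  show ({p : ℕ × ℕ | SpringerPair n σ p.1 p.2}).ncard = dimB L
  rw [← hS2card, ← hHbij.image_eq, Set.ncard_image_of_injOn hHbij.injOn,
    ← hFbij.image_eq, Set.ncard_image_of_injOn hFbij.injOn]

lemma mul_mem_Icc (hd : 0 < d) {m : ℕ} (h1 : 1 ≤ m) (h2 : m ≤ n / d) :
    d * m ∈ Set.Icc 1 n := by
  refine Set.mem_Icc.2 ⟨Nat.mul_pos hd h1, ?_⟩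
  rw [mul_comm]
  exact (Nat.le_div_iff_mul_le hd).1 h2

lemma noninv_dvd (hσ : IsRST L n σ) (hd : 0 < d) (hdiv : TabDivisor n d σ) {i j : ℕ}
    (hp : SpringerPair n σ i j) (hcoleq : (σ i).2 = (σ j).2) :
    d ∣ i ∧ d ∣ j ∧ (i - 1) % d = d - 1 := by
  obtain ⟨hj1, hji, hin, hcol, hrt⟩ := hp
  have hiI : i ∈ Set.Icc 1 n := Set.mem_Icc.2 ⟨by omega, hin⟩
  have hjI : j ∈ Set.Icc 1 n := Set.mem_Icc.2 ⟨hj1, by omega⟩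
  have hai := align hσ hd hdiv i hiI
  have haj := align hσ hd hdiv j hjI
  have htd : (i - 1) % d < d := Nat.mod_lt _ hd
  have hteq : (i - 1) % d = (j - 1) % d := by rw [← hai, ← haj, hcoleq]
  have htd1 : (i - 1) % d = d - 1 := by
    by_contra hne
    have hndj : ¬ d ∣ j := by
      rintro ⟨e, rfl⟩
      have he1 : 1 ≤ e := by
        rcases Nat.eq_zero_or_pos e with h | h
        · subst h; rw [Nat.mul_zero] at hj1; omega
        · exact h
      have hmod : (d * e - 1) % d = d - 1 := by
        rw [show d * e - 1 = (d - 1) + d * (e - 1) from by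
          have h2 : d * e = d * (e - 1) + d := by rw [← Nat.mul_succ]; congr 1; omega
          omega, Nat.add_mul_mod_self_left, Nat.mod_eq_of_lt (by omega)]
      omega
    have hstep := hdiv.2 j hj1 (by omega) hndj
    have := hrt (j + 1) (Set.mem_Icc.2 ⟨by omega, by omega⟩) hstep
    omega
  have hdvd : ∀ m, 1 ≤ m → (m - 1) % d = d - 1 → d ∣ m := by
    intro m h1 h2
    have h14 := Nat.div_add_mod (m - 1) d
    refine ⟨(m - 1) / d + 1, ?_⟩
    have h15 : d * ((m - 1) / d + 1) = d * ((m - 1) / d) + d := by ring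
    omega
  exact ⟨hdvd i (by omega) htd1, hdvd j hj1 (by omega), htd1⟩

lemma noninv_mem_quot (hσ : IsRST L n σ) (hd : 0 < d) (hdiv : TabDivisor n d σ) {M m : ℕ}
    (hm1 : 1 ≤ m) (hlt : m < M) (hMn : d * M ≤ n)
    (hcoleq : (σ (d * M)).2 = (σ (d * m)).2)
    (hrowle : ¬ ((σ (d * m)).1 < (σ (d * M)).1))
    (hrt : ∀ r ∈ Set.Icc 1 n, σ r = ((σ (d * m)).1, (σ (d * m)).2 + 1) → d * M < r) :
    SpringerPair (n / d) (quotTab d σ) M m ∧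
      (quotTab d σ M).2 = (quotTab d σ m).2 ∧
      ¬ ((quotTab d σ m).1 < (quotTab d σ M).1) := by
  have hmn : d * m ≤ n := by
    have : d * m ≤ d * M := Nat.mul_le_mul_left d (by omega)
    omega
  obtain ⟨kM, hcolM, hqM, hblkM⟩ := quot_spec hσ hd hdiv (by omega : 1 ≤ M) hMn
  obtain ⟨km, hcolm, hqm, hblkm⟩ := quot_spec hσ hd hdiv hm1 hmn
  have hkeq : kM = km := by
    have : d * kM = d * km := by omega
    exact Nat.eq_of_mul_eq_mul_left hd this
  have hMq : M ≤ n / d := (Nat.le_div_iff_mul_le hd).2 (by rw [mul_comm]; exact hMn)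
  refine ⟨⟨hm1, hlt, hMq, ?_, ?_⟩, ?_, ?_⟩
  · rw [hqM, hqm]; show kM ≤ km; omega
  · intro r' hr'I hr'pos
    have hr' := Set.mem_Icc.1 hr'I
    have hr'n : d * r' ≤ n := (Set.mem_Icc.1 (mul_mem_Icc hd hr'.1 hr'.2)).2
    obtain ⟨k', hcol', hq', hblk'⟩ := quot_spec hσ hd hdiv hr'.1 hr'n
    rw [hq', hqm] at hr'pos
    obtain ⟨hrow', hk'⟩ := Prod.mk.inj hr'pos
    have hstart := hblk' 0 hd
    have hr'mul : d * (r' - 1) + d = d * r' := by rw [← Nat.mul_succ]; congr 1; omega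
    have hrr := hrt (d * (r' - 1) + 1) (Set.mem_Icc.2 ⟨by omega, by omega⟩)
      (by rw [hstart, hrow']
          refine Prod.ext rfl ?_
          show d * k' + 0 = (σ (d * m)).2 + 1
          have : d * k' = d * (km + 1) := by rw [hk']
          have h25 : d * (km + 1) = d * km + d := by ring
          omega)
    have : d * M ≤ d * (r' - 1) := by omega
    have : M ≤ r' - 1 := Nat.le_of_mul_le_mul_left this hd
    omega
  · rw [hqM, hqm]; show kM = km; omega
  · rw [hqM, hqm]; exact hrowle

lemma noninv_mem_orig (hσ : IsRST L n σ) (hd : 0 < d) (hdiv : TabDivisor n d σ) {M m : ℕ}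
    (hq : SpringerPair (n / d) (quotTab d σ) M m)
    (hcoleq : (quotTab d σ M).2 = (quotTab d σ m).2)
    (hrowle : ¬ ((quotTab d σ m).1 < (quotTab d σ M).1)) :
    SpringerPair n σ (d * M) (d * m) ∧ (σ (d * M)).2 = (σ (d * m)).2 ∧
      ¬ ((σ (d * m)).1 < (σ (d * M)).1) := by
  obtain ⟨hm1, hmM, hMn, hcl, hqrt⟩ := hq
  have hMn' : d * M ≤ n := (Set.mem_Icc.1 (mul_mem_Icc hd (by omega) hMn)).2
  have hmn' : d * m ≤ n := by
    have : d * m ≤ d * M := Nat.mul_le_mul_left d (by omega)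
    omega
  obtain ⟨kM, hcolM, hqM, hblkM⟩ := quot_spec hσ hd hdiv (by omega : 1 ≤ M) hMn'
  obtain ⟨km, hcolm, hqm, hblkm⟩ := quot_spec hσ hd hdiv hm1 hmn'
  rw [hqM, hqm] at hcoleq hrowle
  have hkeq : kM = km := hcoleq
  subst hkeq
  have hcoleq' : (σ (d * M)).2 = (σ (d * m)).2 := by omega
  refine ⟨⟨Nat.mul_pos hd hm1, ?_, hMn', by omega, ?_⟩, hcoleq', hrowle⟩
  · have := Nat.mul_le_mul_left d (show m + 1 ≤ M from hmM)
    have h2 : d * (m + 1) = d * m + d := by ring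
    omega
  · intro r hrI hrpos
    have hr := Set.mem_Icc.1 hrI
    have hal := align hσ hd hdiv r hrI
    have hcolr : (σ r).2 = d * kM + d := by
      have := congrArg Prod.snd hrpos
      simp only at this
      omega
    have hmodr : (r - 1) % d = 0 := by
      rw [← hal, hcolr]
      have : d * kM + d = d * (kM + 1) := by ring
      rw [this]
      exact Nat.mul_mod_right d (kM + 1)
    obtain ⟨quo, hquo⟩ := Nat.dvd_of_mod_eq_zero hmodr
    -- r = d * quo + 1
    have hrq : r = d * quo + 1 := by omega
    -- block end d*(quo+1) ≤ n since d ∣ n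
    have hnr : d * quo < n := by omega
    have hdvdgap : d ∣ n - d * quo := Nat.dvd_sub hdiv.1 (Dvd.intro quo rfl)
    have hgap : d ≤ n - d * quo := Nat.le_of_dvd (by omega) hdvdgap
    have hq1n : d * (quo + 1) ≤ n := by
      have : d * (quo + 1) = d * quo + d := by ring
      omega
    obtain ⟨k'', hcol'', hq'', hblk''⟩ := quot_spec hσ hd hdiv (by omega : 1 ≤ quo + 1) hq1n
    have hstart := hblk'' 0 hd
    rw [show quo + 1 - 1 = quo from rfl] at hstart
    rw [show d * quo + 1 + 0 = r from by omega] at hstart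
    -- σ r = (row'', d*k''): compare with hrpos
    have hrow'' : (σ (d * (quo + 1))).1 = (σ (d * m)).1 := by
      have h1 := congrArg Prod.fst hstart
      simp only at h1
      have h2 := congrArg Prod.fst hrpos
      simp only at h2
      rw [← h1]
      exact h2
    have hk'' : k'' = kM + 1 := by
      have h1 := congrArg Prod.snd hstart
      simp only at h1
      -- (σ r).2 = d * k'' + 0
      have h2 : d * k'' = d * (kM + 1) := by
        have h3 : d * (kM + 1) = d * kM + d := by ring
        omega
      exact Nat.eq_of_mul_eq_mul_left hd h2
    have hquoI : quo + 1 ∈ Set.Icc 1 (n / d) :=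
      Set.mem_Icc.2 ⟨by omega, (Nat.le_div_iff_mul_le hd).2 (by rw [mul_comm]; exact hq1n)⟩
    have hMlt := hqrt (quo + 1) hquoI (by
      rw [hq'', hqm, hrow'', hk''])
    have : d * M ≤ d * quo := by
      have := Nat.mul_le_mul_left d (show M + 1 ≤ quo + 1 from by omega)
      have h2 : d * (M + 1) = d * M + d := by ring
      have h3 : d * (quo + 1) = d * quo + d := by ring
      omega
    omega

lemma noninv_card (hσ : IsRST L n σ) (hd : 0 < d) (hdiv : TabDivisor n d σ) :
    {p : ℕ × ℕ | SpringerPair n σ p.1 p.2 ∧ (σ p.1).2 = (σ p.2).2 ∧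
      ¬ ((σ p.2).1 < (σ p.1).1)}.ncard
    = {p : ℕ × ℕ | SpringerPair (n / d) (quotTab d σ) p.1 p.2 ∧
      (quotTab d σ p.1).2 = (quotTab d σ p.2).2 ∧
      ¬ ((quotTab d σ p.2).1 < (quotTab d σ p.1).1)}.ncard := by
  have hbij : Set.BijOn (fun p : ℕ × ℕ => (p.1 / d, p.2 / d))
      {p : ℕ × ℕ | SpringerPair n σ p.1 p.2 ∧ (σ p.1).2 = (σ p.2).2 ∧
        ¬ ((σ p.2).1 < (σ p.1).1)}
      {p : ℕ × ℕ | SpringerPair (n / d) (quotTab d σ) p.1 p.2 ∧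
        (quotTab d σ p.1).2 = (quotTab d σ p.2).2 ∧
        ¬ ((quotTab d σ p.2).1 < (quotTab d σ p.1).1)} := by
    refine ⟨?_, ?_, ?_⟩
    · rintro ⟨i, j⟩ hp
      have hp1 : SpringerPair n σ i j := hp.1
      have hp2 : (σ i).2 = (σ j).2 := hp.2.1
      have hp3 : ¬ ((σ j).1 < (σ i).1) := hp.2.2
      obtain ⟨hdi, hdj, _⟩ := noninv_dvd hσ hd hdiv hp1 hp2
      obtain ⟨M, rfl⟩ := hdi
      obtain ⟨m, rfl⟩ := hdj
      obtain ⟨hj1, hji, hin, hcol, hrt⟩ := hp1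
      have hm1 : 1 ≤ m := by
        rcases Nat.eq_zero_or_pos m with h | h
        · subst h; rw [Nat.mul_zero] at hj1; omega
        · exact h
      have hlt : m < M := Nat.lt_of_mul_lt_mul_left (a := d) hji
      simp only [Set.mem_setOf_eq]
      rw [Nat.mul_div_cancel_left M hd, Nat.mul_div_cancel_left m hd]
      exact noninv_mem_quot hσ hd hdiv hm1 hlt hin hp2 hp3 hrt
    · rintro ⟨i, j⟩ hp ⟨i', j'⟩ hp' heq
      obtain ⟨hdi, hdj, _⟩ := noninv_dvd hσ hd hdiv hp.1 hp.2.1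
      obtain ⟨hdi', hdj', _⟩ := noninv_dvd hσ hd hdiv hp'.1 hp'.2.1
      obtain ⟨M, rfl⟩ := hdi
      obtain ⟨m, rfl⟩ := hdj
      obtain ⟨M', rfl⟩ := hdi'
      obtain ⟨m', rfl⟩ := hdj'
      simp only [Prod.mk.injEq, Nat.mul_div_cancel_left _ hd] at heq
      rw [heq.1, heq.2]
    · rintro ⟨M, m⟩ hq0
      have hq1 : SpringerPair (n / d) (quotTab d σ) M m := hq0.1
      have hq2 : (quotTab d σ M).2 = (quotTab d σ m).2 := hq0.2.1
      have hq3 : ¬ ((quotTab d σ m).1 < (quotTab d σ M).1) := hq0.2.2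
      obtain ⟨hmem1, hmem2, hmem3⟩ := noninv_mem_orig hσ hd hdiv hq1 hq2 hq3
      refine ⟨(d * M, d * m), ⟨hmem1, hmem2, hmem3⟩, ?_⟩
      simp only
      rw [Nat.mul_div_cancel_left M hd, Nat.mul_div_cancel_left m hd]
  rw [← hbij.image_eq, Set.ncard_image_of_injOn hbij.injOn]

lemma pairs_finite (n : ℕ) (σ : ℕ → ℕ × ℕ) :
    {p : ℕ × ℕ | SpringerPair n σ p.1 p.2}.Finite := by
  apply Set.Finite.subset ((Set.finite_Icc 1 n).prod (Set.finite_Icc 1 n))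
  rintro ⟨i, j⟩ hp
  have h : SpringerPair n σ i j := hp
  obtain ⟨h1, h2, h3, _⟩ := h
  exact ⟨Set.mem_Icc.2 ⟨by omega, h3⟩, Set.mem_Icc.2 ⟨h1, by omega⟩⟩

lemma pairs_split (n : ℕ) (σ : ℕ → ℕ × ℕ) :
    pairsCount n σ = invCount n σ +
      {p : ℕ × ℕ | SpringerPair n σ p.1 p.2 ∧ (σ p.1).2 = (σ p.2).2 ∧
        ¬ ((σ p.2).1 < (σ p.1).1)}.ncard := by
  have hfin := pairs_finite n σ
  have hunion : {p : ℕ × ℕ | SpringerPair n σ p.1 p.2} =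
      {p : ℕ × ℕ | SpringerInv n σ p.1 p.2} ∪
      {p : ℕ × ℕ | SpringerPair n σ p.1 p.2 ∧ (σ p.1).2 = (σ p.2).2 ∧
        ¬ ((σ p.2).1 < (σ p.1).1)} := by
    ext p
    simp only [Set.mem_setOf_eq, Set.mem_union, SpringerInv]
    constructor
    · intro h
      by_cases hc : (σ p.1).2 = (σ p.2).2
      · by_cases hr : (σ p.2).1 < (σ p.1).1
        · exact Or.inl ⟨h, fun _ => hr⟩
        · exact Or.inr ⟨h, hc, hr⟩
      · exact Or.inl ⟨h, fun hcc => absurd hcc hc⟩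
    · rintro (⟨h, _⟩ | ⟨h, _, _⟩) <;> exact h
  have hdisj : Disjoint {p : ℕ × ℕ | SpringerInv n σ p.1 p.2}
      {p : ℕ × ℕ | SpringerPair n σ p.1 p.2 ∧ (σ p.1).2 = (σ p.2).2 ∧
        ¬ ((σ p.2).1 < (σ p.1).1)} := by
    rw [Set.disjoint_left]
    rintro p ⟨hpair, himp⟩ ⟨_, hc, hr⟩
    exact hr (himp hc)
  have hfin1 : {p : ℕ × ℕ | SpringerInv n σ p.1 p.2}.Finite :=
    hfin.subset (fun p hp => hp.1)
  have hfin2 : {p : ℕ × ℕ | SpringerPair n σ p.1 p.2 ∧ (σ p.1).2 = (σ p.2).2 ∧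
      ¬ ((σ p.2).1 < (σ p.1).1)}.Finite := hfin.subset (fun p hp => hp.1)
  show ({p : ℕ × ℕ | SpringerPair n σ p.1 p.2}).ncard = _
  rw [hunion, Set.ncard_union_eq hdisj hfin1 hfin2]
  rfl

/-- Let `σ` be a row-strict tableau of shape `λ ⊢ n` and `d` a divisor of `σ`.  Then
`|inv(σ)| = D_{λ,d} + |inv(σ/d)|`, where
`D_{λ,d} = ((d−1)/d)·Σ_i (i−1)λ_i = Σ_i (i−1)λ_i − Σ_i (i−1)(λ_i/d)`. -/
theorem stmt11 (L : List ℕ) (n d : ℕ) (hL : IsPartition L n) (σ : ℕ → ℕ × ℕ)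
    (hσ : IsRST L n σ) (hd : 0 < d) (hdiv : TabDivisor n d σ) :
    invCount n σ
      = (dimB L - dimB (L.map (· / d))) + invCount (n / d) (quotTab d σ) := by
  obtain ⟨hsum, hsort, hposL⟩ := hL
  have hq : IsRST (L.map (· / d)) (n / d) (quotTab d σ) := quot_RST hσ hd hdiv
  have hsortq : (L.map (· / d)).Pairwise (· ≥ ·) :=
    List.Pairwise.map _ (fun a b hab => Nat.div_le_div_right hab) hsort
  have hp1 : pairsCount n σ = dimB L := pairs_eq hsort hσ
  have hp2 : pairsCount (n / d) (quotTab d σ) = dimB (L.map (· / d)) := pairs_eq hsortq hq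
  have hsplit1 := pairs_split n σ
  have hsplit2 := pairs_split (n / d) (quotTab d σ)
  have hN := noninv_card hσ hd hdiv
  have hle : dimB (L.map (· / d)) ≤ dimB L := by
    unfold dimB
    rw [List.length_map]
    apply Finset.sum_le_sum
    intro i _
    have hgi : (L.map (· / d)).getD i 0 = L.getD i 0 / d := by
      simpa using List.getD_map L 0 (n := i) (· / d)
    rw [hgi]
    exact Nat.mul_le_mul_left i (Nat.div_le_self _ _)
  omega

end Aux
end
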